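/- A minimal Dörfler marked set consists of elements with the largest indicators: if T is finite, η : T → ℝ_{≥0}, θ ∈ (0,1), then there exists a subset M of minimal cardinality satisfying Σ_{T∈M} η²(T) ≥ θ Σ_{T∈T} η²(T), and such an M can be chosen so that min_{T∈M} η(T) ≥ max_{T∉M} η(T). -/

import Mathlib

open scoped BigOperators

lemma sum_sq_le_of_dominates {α : Type*} [DecidableEq α] (η : α → ℝ)
    (hη : ∀ t, 0 ≤ η t) (A B : Finset α) (hcard : B.card ≤ A.card)
    (h : ∀ a ∈ A, ∀ b ∈ B, b ∉ A → η b ≤ η a) :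
    ∑ b ∈ B, η b ^ 2 ≤ ∑ a ∈ A, η a ^ 2 := by
  have hBsplit : ∑ b ∈ B, η b ^ 2 = ∑ b ∈ B ∩ A, η b ^ 2 + ∑ b ∈ B \ A, η b ^ 2 := by
    rw [Finset.sum_inter_add_sum_sdiff]
  have hAsplit : ∑ a ∈ A, η a ^ 2 = ∑ a ∈ A ∩ B, η a ^ 2 + ∑ a ∈ A \ B, η a ^ 2 := by
    rw [Finset.sum_inter_add_sum_sdiff]
  have hIcomm : B ∩ A = A ∩ B := Finset.inter_comm _ _
  have hcardd : (B \ A).card ≤ (A \ B).card := by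
    have h1 := Finset.card_inter_add_card_sdiff B A
    have h2 := Finset.card_inter_add_card_sdiff A B
    rw [hIcomm] at h1
    omega
  have key : ∑ b ∈ B \ A, η b ^ 2 ≤ ∑ a ∈ A \ B, η a ^ 2 := by
    rcases Finset.eq_empty_or_nonempty (B \ A) with he | hne
    · rw [he, Finset.sum_empty]
      exact Finset.sum_nonneg fun a _ => sq_nonneg _
    · have hABne : (A \ B).Nonempty := by
        rw [← Finset.card_pos] at hne ⊢; omega
      obtain ⟨t0, ht0mem, ht0min⟩ := Finset.exists_min_image (A \ B) η hABne
      have hb : ∀ b ∈ B \ A, η b ^ 2 ≤ η t0 ^ 2 := by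
        intro b hb
        rw [Finset.mem_sdiff] at hb
        have := h t0 (Finset.mem_sdiff.mp ht0mem).1 b hb.1 hb.2
        exact pow_le_pow_left₀ (hη b) this 2
      calc ∑ b ∈ B \ A, η b ^ 2 ≤ (B \ A).card • (η t0 ^ 2) :=
              Finset.sum_le_card_nsmul _ _ _ hb
        _ ≤ (A \ B).card • (η t0 ^ 2) := by
              exact nsmul_le_nsmul_left (sq_nonneg _) hcardd
        _ ≤ ∑ a ∈ A \ B, η a ^ 2 := by
              refine Finset.card_nsmul_le_sum _ _ _ fun a ha => ?_
              exact pow_le_pow_left₀ (hη t0) (ht0min a ha) 2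
  rw [hBsplit, hAsplit, hIcomm]
  exact add_le_add_right key _

/-- A minimal Dörfler marked set can be chosen to consist of elements with the
largest error indicators. -/
theorem stmt_15 {α : Type*} [DecidableEq α] (T : Finset α) (η : α → ℝ)
    (hη : ∀ t, 0 ≤ η t) (θ : ℝ) (hθ : θ ∈ Set.Ioo (0 : ℝ) 1) :
    ∃ M : Finset α, M ⊆ T ∧ (θ * ∑ t ∈ T, η t ^ 2 ≤ ∑ t ∈ M, η t ^ 2) ∧
      (∀ M' : Finset α, M' ⊆ T →
        θ * ∑ t ∈ T, η t ^ 2 ≤ ∑ t ∈ M', η t ^ 2 → M.card ≤ M'.card) ∧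
      ∀ t ∈ M, ∀ s ∈ T, s ∉ M → η s ≤ η t := by
  classical
  set l : List α := T.toList.mergeSort (fun a b => decide (η b ≤ η a)) with hl
  have hperm : List.Perm l T.toList := List.mergeSort_perm _ _
  have hnodup : l.Nodup := hperm.nodup_iff.mpr T.nodup_toList
  have hlT : l.toFinset = T := by
    ext x
    simp [List.mem_toFinset, hperm.mem_iff]
  have hsorted : l.Pairwise (fun a b => η b ≤ η a) := by
    have := List.pairwise_mergeSort (le := fun a b => decide (η b ≤ η a))
      (fun a b c h1 h2 => by
        simp only [decide_eq_true_eq] at *; exact le_trans h2 h1)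
      (fun a b => by
        simp only [Bool.or_eq_true, decide_eq_true_eq]; exact le_total (η b) (η a))
      T.toList
    rw [hl]
    exact this.imp (fun h => by simpa using h)
  -- the prefix sets
  have hdom : ∀ k, ∀ a ∈ (l.take k).toFinset, ∀ b ∈ T, b ∉ (l.take k).toFinset →
      η b ≤ η a := by
    intro k a ha b hb hbn
    rw [List.mem_toFinset] at ha hbn
    have hbl : b ∈ l := by rw [← hlT] at hb; exact List.mem_toFinset.mp hb
    have hbd : b ∈ l.drop k := by
      rcases (List.mem_append.mp (by rwa [← List.take_append_drop k l] at hbl)) with h | h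
      · exact absurd h hbn
      · exact h
    have := (List.pairwise_append.mp (by rwa [← List.take_append_drop k l] at hsorted)).2.2
    exact this a ha b hbd
  have hsub : ∀ k, (l.take k).toFinset ⊆ T := by
    intro k x hx
    rw [List.mem_toFinset] at hx
    rw [← hlT, List.mem_toFinset]
    exact List.mem_of_mem_take hx
  have hsumT : ∑ t ∈ T, η t ^ 2 = ∑ t ∈ l.toFinset, η t ^ 2 := by rw [hlT]
  have hSnn : 0 ≤ ∑ t ∈ T, η t ^ 2 := Finset.sum_nonneg fun a _ => sq_nonneg _
  have hPlen : θ * ∑ t ∈ T, η t ^ 2 ≤ ∑ t ∈ (l.take l.length).toFinset, η t ^ 2 := by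
    rw [List.take_length, hlT]
    exact mul_le_of_le_one_left hSnn hθ.2.le
  have hEx : ∃ k, θ * ∑ t ∈ T, η t ^ 2 ≤ ∑ t ∈ (l.take k).toFinset, η t ^ 2 :=
    ⟨l.length, hPlen⟩
  set k := Nat.find hEx with hk
  have hkle : k ≤ l.length := Nat.find_le hPlen
  have hcardk : ∀ m, m ≤ l.length → ((l.take m).toFinset).card = m := by
    intro m hm
    rw [List.toFinset_card_of_nodup (hnodup.sublist (List.take_sublist _ _)),
      List.length_take]
    omega
  refine ⟨(l.take k).toFinset, hsub k, Nat.find_spec hEx, ?_, ?_⟩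
  · intro M' hM' hsum
    by_contra hlt
    push_neg at hlt
    rw [hcardk k hkle] at hlt
    have hmle : M'.card < k := hlt
    have : θ * ∑ t ∈ T, η t ^ 2 ≤ ∑ t ∈ (l.take M'.card).toFinset, η t ^ 2 := by
      refine le_trans hsum ?_
      refine sum_sq_le_of_dominates η hη _ _ ?_ ?_
      · rw [hcardk M'.card (by omega)]
      · intro a ha b hb hbn
        exact hdom M'.card a ha b (hM' hb) hbn
    exact Nat.find_min hEx hmle this
  · intro t ht s hs hsn
    exact hdom k t ht s hs hsn
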